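/- Let L : ℝ^p → ℝ be twice continuously differentiable whose Hessian is L₀-Lipschitz in spectral norm, i.e. ‖∇²L(θ₁) − ∇²L(θ₂)‖₂ ≤ L₀‖θ₁ − θ₂‖₂ for all θ₁, θ₂ ∈ ℝ^p. Fix θ ∈ ℝ^p such that ∇²L(θ) is invertible with smallest eigenvalue λ_min(∇²L(θ)) ≥ μ₀ > 0, and set Δθ = −[∇²L(θ)]⁻¹∇L(θ). Then for every N ∈ ℝ^p: ‖∇L(θ + Δθ + N)‖₂ ≤ (L₀/(2μ₀²))‖∇L(θ)‖₂² + (L₀‖Δθ‖₂ + ‖∇²L(θ)‖₂)‖N‖₂ + (L₀/2)‖N‖₂². -/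

import Mathlib

set_option synthInstance.maxHeartbeats 1000000
set_option maxHeartbeats 2000000

open Set
open scoped RealInnerProductSpace

lemma taylor_grad {E : Type*} [NormedAddCommGroup E] [NormedSpace ℝ E]
    (g : E → E) (H : E → E →L[ℝ] E) (hH : ∀ x, HasFDerivAt g (H x) x)
    (L₀ : ℝ) (hLip : ∀ x y, ‖H x - H y‖ ≤ L₀ * ‖x - y‖) (x h : E) :
    ‖g (x + h) - g x - H x h‖ ≤ L₀ / 2 * ‖h‖ ^ 2 := by
  set f : ℝ → E := fun t => g (x + t • h) - g x - t • (H x h) with hf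
  set f' : ℝ → E := fun t => H (x + t • h) h - H x h with hf'
  have hderiv : ∀ t : ℝ, HasDerivAt f (f' t) t := by
    intro t
    have hcurve : HasDerivAt (fun t : ℝ => x + t • h) h t := by
      simpa using ((hasDerivAt_id t).smul_const h).const_add x
    have h1 : HasDerivAt (fun t : ℝ => g (x + t • h)) (H (x + t • h) h) t :=
      (hH (x + t • h)).comp_hasDerivAt t hcurve
    have h2 : HasDerivAt (fun t : ℝ => t • (H x h)) (H x h) t := by
      simpa using (hasDerivAt_id t).smul_const (H x h)
    exact (h1.sub_const (g x)).sub h2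
  have hB : ∀ t : ℝ, HasDerivAt (fun t : ℝ => L₀ * ‖h‖ ^ 2 / 2 * t ^ 2) (L₀ * ‖h‖ ^ 2 * t) t := by
    intro t
    have := ((hasDerivAt_pow 2 t).const_mul (L₀ * ‖h‖ ^ 2 / 2))
    refine this.congr_deriv ?_
    ring
  have bound : ∀ t ∈ Ico (0 : ℝ) 1, ‖f' t‖ ≤ L₀ * ‖h‖ ^ 2 * t := by
    intro t ht
    calc ‖f' t‖ = ‖(H (x + t • h) - H x) h‖ := by simp [hf']
      _ ≤ ‖H (x + t • h) - H x‖ * ‖h‖ := (H (x + t • h) - H x).le_opNorm h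
      _ ≤ (L₀ * ‖x + t • h - x‖) * ‖h‖ := by
          gcongr; exact hLip _ _
      _ = L₀ * ‖h‖ ^ 2 * t := by
          simp [norm_smul, abs_of_nonneg ht.1]; ring
  have key := image_norm_le_of_norm_deriv_right_le_deriv_boundary
    (B := fun t : ℝ => L₀ * ‖h‖ ^ 2 / 2 * t ^ 2) (B' := fun t : ℝ => L₀ * ‖h‖ ^ 2 * t)
    (a := (0:ℝ)) (b := (1:ℝ))
    (fun t _ => (hderiv t).continuousAt.continuousWithinAt)
    (fun t _ => (hderiv t).hasDerivWithinAt)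
    (by simp [hf]) hB bound (right_mem_Icc.2 zero_le_one)
  have : f 1 = g (x + h) - g x - H x h := by simp [hf]
  rw [this] at key
  calc ‖g (x + h) - g x - H x h‖ ≤ L₀ * ‖h‖ ^ 2 / 2 * 1 ^ 2 := key
    _ = L₀ / 2 * ‖h‖ ^ 2 := by ring

/-- the key one-step inequality for a noisy Newton step `θ ↦ θ + Δθ + N`,
where `Δθ = -[∇²L(θ)]⁻¹ ∇L(θ)` and the Hessian is `L₀`-Lipschitz in operator norm. -/
theorem stmt_7 {p : ℕ} (L : EuclideanSpace ℝ (Fin p) → ℝ) (L₀ : ℝ) (hL₀ : 0 < L₀)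
    (hC2 : ContDiff ℝ 2 L)
    (H : EuclideanSpace ℝ (Fin p) → (EuclideanSpace ℝ (Fin p) →L[ℝ] EuclideanSpace ℝ (Fin p)))
    (hH : ∀ x, HasFDerivAt (gradient L) (H x) x)
    (hLip : ∀ θ₁ θ₂ : EuclideanSpace ℝ (Fin p), ‖H θ₁ - H θ₂‖ ≤ L₀ * ‖θ₁ - θ₂‖)
    (θ : EuclideanSpace ℝ (Fin p)) (μ₀ : ℝ) (hμ₀ : 0 < μ₀)
    (hunit : IsUnit (H θ))
    (hmin : ∀ u : EuclideanSpace ℝ (Fin p), μ₀ * ‖u‖ ^ 2 ≤ ⟪u, H θ u⟫)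
    (Δθ : EuclideanSpace ℝ (Fin p)) (hΔ : Δθ = -(Ring.inverse (H θ) (gradient L θ)))
    (N : EuclideanSpace ℝ (Fin p)) :
    ‖gradient L (θ + Δθ + N)‖ ≤
      L₀ / (2 * μ₀ ^ 2) * ‖gradient L θ‖ ^ 2 + (L₀ * ‖Δθ‖ + ‖H θ‖) * ‖N‖ + L₀ / 2 * ‖N‖ ^ 2 := by
  set g := gradient L with hg
  -- key identity: H θ Δθ = - g θ
  have hkey : H θ Δθ = -(g θ) := by
    rw [hΔ, map_neg]
    congr 1
    have : (H θ * Ring.inverse (H θ)) (g θ) = (1 : EuclideanSpace ℝ (Fin p) →L[ℝ] _) (g θ) := by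
      rw [Ring.mul_inverse_cancel _ hunit]
    simpa using this
  -- ‖Δθ‖ ≤ ‖g θ‖ / μ₀
  have hΔnorm : μ₀ * ‖Δθ‖ ≤ ‖g θ‖ := by
    rcases eq_or_ne Δθ 0 with h0 | h0
    · simp [h0]
    · have h1 : μ₀ * ‖Δθ‖ ^ 2 ≤ ⟪Δθ, H θ Δθ⟫ := hmin Δθ
      have h2 : ⟪Δθ, H θ Δθ⟫ ≤ ‖Δθ‖ * ‖H θ Δθ‖ := real_inner_le_norm _ _
      have h3 : ‖H θ Δθ‖ = ‖g θ‖ := by rw [hkey, norm_neg]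
      have hpos : 0 < ‖Δθ‖ := norm_pos_iff.2 h0
      nlinarith [h1, h2, h3]
  -- step A : after exact Newton step
  have hA : ‖g (θ + Δθ)‖ ≤ L₀ / (2 * μ₀ ^ 2) * ‖g θ‖ ^ 2 := by
    have ht := taylor_grad g H hH L₀ hLip θ Δθ
    have : g (θ + Δθ) - g θ - H θ Δθ = g (θ + Δθ) := by rw [hkey]; abel
    rw [this] at ht
    refine ht.trans ?_
    have hsq : μ₀ ^ 2 * ‖Δθ‖ ^ 2 ≤ ‖g θ‖ ^ 2 := by
      have h1 : (μ₀ * ‖Δθ‖) ^ 2 ≤ ‖g θ‖ ^ 2 := by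
        apply sq_le_sq' _ hΔnorm
        have : 0 ≤ μ₀ * ‖Δθ‖ := by positivity
        nlinarith [norm_nonneg (g θ)]
      nlinarith
    rw [div_mul_eq_mul_div, div_mul_eq_mul_div, div_le_div_iff₀ (by norm_num) (by positivity)]
    nlinarith
  -- step B : adding noise
  have hB : ‖g (θ + Δθ + N) - g (θ + Δθ) - H (θ + Δθ) N‖ ≤ L₀ / 2 * ‖N‖ ^ 2 :=
    taylor_grad g H hH L₀ hLip (θ + Δθ) N
  -- norm of H (θ + Δθ)
  have hHnorm : ‖H (θ + Δθ) N‖ ≤ (L₀ * ‖Δθ‖ + ‖H θ‖) * ‖N‖ := by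
    calc ‖H (θ + Δθ) N‖ ≤ ‖H (θ + Δθ)‖ * ‖N‖ := (H (θ + Δθ)).le_opNorm N
      _ ≤ (L₀ * ‖Δθ‖ + ‖H θ‖) * ‖N‖ := by
          have h1 : ‖H (θ + Δθ)‖ ≤ ‖H (θ + Δθ) - H θ‖ + ‖H θ‖ := by
            have := norm_add_le (H (θ + Δθ) - H θ) (H θ)
            simpa using this
          have h2 : ‖H (θ + Δθ) - H θ‖ ≤ L₀ * ‖Δθ‖ := by simpa using hLip (θ + Δθ) θ
          have h3 : ‖H (θ + Δθ)‖ ≤ L₀ * ‖Δθ‖ + ‖H θ‖ := h1.trans (add_le_add_left h2 _)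
          exact mul_le_mul_of_nonneg_right h3 (norm_nonneg N)
  calc ‖g (θ + Δθ + N)‖
      ≤ ‖g (θ + Δθ + N) - g (θ + Δθ) - H (θ + Δθ) N‖ + ‖H (θ + Δθ) N‖ + ‖g (θ + Δθ)‖ := by
        have : g (θ + Δθ + N) =
            (g (θ + Δθ + N) - g (θ + Δθ) - H (θ + Δθ) N) + H (θ + Δθ) N + g (θ + Δθ) := by abel
        conv_lhs => rw [this]
        exact norm_add₃_le
    _ ≤ L₀ / 2 * ‖N‖ ^ 2 + (L₀ * ‖Δθ‖ + ‖H θ‖) * ‖N‖ + L₀ / (2 * μ₀ ^ 2) * ‖g θ‖ ^ 2 := by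
        gcongr
    _ = L₀ / (2 * μ₀ ^ 2) * ‖g θ‖ ^ 2 + (L₀ * ‖Δθ‖ + ‖H θ‖) * ‖N‖ + L₀ / 2 * ‖N‖ ^ 2 := by ring
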